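/- For integers 2 ≤ k ≤ n and real p ≥ 2, ν ∈ [0,1], consider the convex function f_k : ℝⁿ → ℝ given by f_k(x) = (1/(p+ν))·[Σ_{i=1}^{k−1} |x^{(i)}−x^{(i+1)}|^{p+ν} + Σ_{i=k}^{n} |x^{(i)}|^{p+ν}] − x^{(1)}. Then f_k has a unique global minimizer x_k*, its optimal value is f_k* = −(p+ν−1)k/(p+ν), and ‖x_k*‖ < (k+1)^{3/2}/√3. -/

import Mathlib

/-- The `i`-th coordinate of `x` in 1-based indexing (0 outside the range `1..n`). -/
noncomputable def coord {n : ℕ} (x : EuclideanSpace ℝ (Fin n)) (i : ℕ) : ℝ :=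
  if h : 1 ≤ i ∧ i ≤ n then x ⟨i - 1, by omega⟩ else 0

/-- The difficult function `f_k` from the lower-bound construction, with exponent `pν = p + ν`. -/
noncomputable def hardFun (n k : ℕ) (pν : ℝ) (x : EuclideanSpace ℝ (Fin n)) : ℝ :=
  (1 / pν) * ((∑ i ∈ Finset.Ico 1 k, |coord x i - coord x (i + 1)| ^ pν)
    + ∑ i ∈ Finset.Icc k n, |coord x i| ^ pν) - coord x 1

/-- Bernoulli-type inequality: `1 + q (t-1) ≤ |t|^q` for `q > 1`. -/
lemma bern {q t : ℝ} (hq : 1 < q) : 1 + q * (t - 1) ≤ |t| ^ q := by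
  rcases le_or_gt 0 t with ht | ht
  · rw [abs_of_nonneg ht]
    have := one_add_mul_self_le_rpow_one_add (s := t - 1) (by linarith) hq.le
    simpa using this
  · rw [abs_of_neg ht]
    have h1 := one_add_mul_self_le_rpow_one_add (s := -t - 1) (by linarith) hq.le
    have : (1 : ℝ) + q * (t - 1) ≤ 1 + q * (-t - 1) := by nlinarith
    calc (1:ℝ) + q * (t - 1) ≤ 1 + q * (-t - 1) := this
      _ ≤ (1 + (-t - 1)) ^ q := h1
      _ = (-t) ^ q := by ring_nf

/-- Strict version when `t ≠ 1`. -/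
lemma bern_strict {q t : ℝ} (hq : 1 < q) (ht : t ≠ 1) : 1 + q * (t - 1) < |t| ^ q := by
  rcases le_or_gt 0 t with ht0 | ht0
  · rw [abs_of_nonneg ht0]
    have := one_add_mul_self_lt_rpow_one_add (s := t - 1) (by linarith)
      (by intro h; exact ht (by linarith [sub_eq_zero.mp h])) hq
    simpa using this
  · rw [abs_of_neg ht0]
    have h1 := one_add_mul_self_le_rpow_one_add (s := -t - 1) (by linarith) hq.le
    have : (1 : ℝ) + q * (t - 1) < 1 + q * (-t - 1) := by nlinarith
    calc (1:ℝ) + q * (t - 1) < 1 + q * (-t - 1) := this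
      _ ≤ (1 + (-t - 1)) ^ q := h1
      _ = (-t) ^ q := by ring_nf

/-- telescoping sum -/
lemma tele (g : ℕ → ℝ) : ∀ k, 1 ≤ k → ∑ i ∈ Finset.Ico 1 k, (g i - g (i + 1)) = g 1 - g k := by
  intro k
  induction k with
  | zero => omega
  | succ m ih =>
    intro _
    rcases Nat.lt_or_ge m 1 with hm | hm
    · interval_cases m <;> simp
    · rw [Finset.sum_Ico_succ_top (by omega), ih hm]; ring

/-- The candidate minimizer. -/
noncomputable def xs (n k : ℕ) : EuclideanSpace ℝ (Fin n) :=
  WithLp.toLp 2 fun j => if (j : ℕ) + 1 ≤ k then (k : ℝ) - (j : ℕ) else 0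

lemma coord_eq {n : ℕ} (x : EuclideanSpace ℝ (Fin n)) (j : Fin n) :
    coord x ((j : ℕ) + 1) = x j := by
  have h : 1 ≤ (j : ℕ) + 1 ∧ (j : ℕ) + 1 ≤ n := ⟨by omega, by omega⟩
  rw [coord, dif_pos h]
  exact congrArg (fun i => x i) (Fin.ext (by simp))

lemma coord_xs {n k i : ℕ} (h1 : 1 ≤ i) (h2 : i ≤ n) :
    coord (xs n k) i = if i ≤ k then (k : ℝ) + 1 - i else 0 := by
  rw [coord, dif_pos ⟨h1, h2⟩]
  show (if (i - 1) + 1 ≤ k then (k : ℝ) - (i - 1 : ℕ) else 0) = _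
  rcases le_or_gt i k with h | h
  · rw [if_pos (by omega), if_pos h, Nat.cast_sub h1]
    push_cast; ring
  · rw [if_neg (by omega), if_neg (by omega)]

/-- The key decomposition of `hardFun` into the optimal value plus nonnegative slack terms. -/
lemma decomp (n k : ℕ) (hk : 1 ≤ k) (hkn : k ≤ n) (q : ℝ) (hq : q ≠ 0)
    (y : EuclideanSpace ℝ (Fin n)) :
    hardFun n k q y = ((k : ℝ) / q - k)
      + (∑ i ∈ Finset.Ico 1 k,
          ((1/q) * |coord y i - coord y (i + 1)| ^ q - 1/q - (coord y i - coord y (i+1) - 1)))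
      + ((1/q) * |coord y k| ^ q - 1/q - (coord y k - 1))
      + ∑ i ∈ Finset.Icc (k+1) n, (1/q) * |coord y i| ^ q := by
  have hsplit : ∑ i ∈ Finset.Icc k n, |coord y i| ^ q
      = |coord y k| ^ q + ∑ i ∈ Finset.Icc (k+1) n, |coord y i| ^ q := by
    rw [show Finset.Icc k n = insert k (Finset.Icc (k+1) n) by
      ext a; simp only [Finset.mem_Icc, Finset.mem_insert]; omega]
    rw [Finset.sum_insert (by simp)]
  have hA : ∑ i ∈ Finset.Ico 1 k,
      ((1/q) * |coord y i - coord y (i + 1)| ^ q - 1/q - (coord y i - coord y (i+1) - 1))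
      = (1/q) * (∑ i ∈ Finset.Ico 1 k, |coord y i - coord y (i + 1)| ^ q)
        - ((k:ℝ) - 1)/q - (coord y 1 - coord y k) + ((k:ℝ) - 1) := by
    rw [Finset.sum_sub_distrib, Finset.sum_sub_distrib, ← Finset.mul_sum,
      Finset.sum_const, Finset.sum_sub_distrib, tele (fun i => coord y i) k hk,
      Finset.sum_const]
    have hc : (Finset.Ico 1 k).card = k - 1 := by rw [Nat.card_Ico]
    rw [hc]
    simp only [nsmul_eq_mul]
    have : ((k - 1 : ℕ) : ℝ) = (k : ℝ) - 1 := by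
      rw [Nat.cast_sub hk]; simp
    rw [this]
    ring
  rw [hardFun, hsplit, hA]
  have hC : ∑ i ∈ Finset.Icc (k+1) n, (1/q) * |coord y i| ^ q
      = (1/q) * ∑ i ∈ Finset.Icc (k+1) n, |coord y i| ^ q := by
    rw [Finset.mul_sum]
  rw [hC]
  field_simp
  ring

lemma hardFun_xs (n k : ℕ) (hk : 1 ≤ k) (hkn : k ≤ n) (q : ℝ) (hq : 1 < q) :
    hardFun n k q (xs n k) = (k : ℝ) / q - k := by
  have hq0 : q ≠ 0 := by linarith
  rw [decomp n k hk hkn q hq0]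
  have h1 : ∀ i ∈ Finset.Ico 1 k,
      ((1/q) * |coord (xs n k) i - coord (xs n k) (i + 1)| ^ q - 1/q
        - (coord (xs n k) i - coord (xs n k) (i+1) - 1)) = 0 := by
    intro i hi
    simp only [Finset.mem_Ico] at hi
    rw [coord_xs (by omega) (by omega), coord_xs (by omega) (by omega),
      if_pos (by omega), if_pos (by omega)]
    have : ((k:ℝ) + 1 - i) - ((k:ℝ) + 1 - (i+1:ℕ)) = 1 := by push_cast; ring
    rw [this]
    simp [Real.one_rpow]
  have h2 : coord (xs n k) k = 1 := by
    rw [coord_xs hk hkn, if_pos le_rfl]; ring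
  have h3 : ∀ i ∈ Finset.Icc (k+1) n, (1/q) * |coord (xs n k) i| ^ q = 0 := by
    intro i hi
    simp only [Finset.mem_Icc] at hi
    rw [coord_xs (by omega) (by omega), if_neg (by omega)]
    simp [Real.zero_rpow hq0]
  rw [Finset.sum_eq_zero h1, Finset.sum_eq_zero h3, h2]
  simp [Real.one_rpow]

lemma slackA_nonneg {q t : ℝ} (hq : 1 < q) :
    0 ≤ (1/q) * |t| ^ q - 1/q - (t - 1) := by
  have hq0 : 0 < q := by linarith
  have hb := bern (t := t) hq
  have h : (1/q) * |t| ^ q - 1/q - (t - 1) = (1/q) * (|t| ^ q - (1 + q * (t-1))) := by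
    field_simp; ring
  rw [h]
  exact mul_nonneg (by positivity) (by linarith)

lemma slackA_eq_zero {q t : ℝ} (hq : 1 < q)
    (h : (1/q) * |t| ^ q - 1/q - (t - 1) = 0) : t = 1 := by
  by_contra ht
  have hq0 : 0 < q := by linarith
  have hb := bern_strict (t := t) hq ht
  have h2 : (1/q) * |t| ^ q - 1/q - (t - 1) = (1/q) * (|t| ^ q - (1 + q * (t-1))) := by
    field_simp; ring
  rw [h2] at h
  have : |t| ^ q - (1 + q * (t-1)) > 0 := by linarith
  nlinarith [one_div_pos.mpr hq0]

lemma slackC_eq_zero {q t : ℝ} (hq : 1 < q) (h : (1/q) * |t| ^ q = 0) : t = 0 := by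
  by_contra ht
  have hq0 : 0 < q := by linarith
  have : (0:ℝ) < |t| ^ q := Real.rpow_pos_of_pos (abs_pos.mpr ht) q
  have : (0:ℝ) < (1/q) * |t| ^ q := by positivity
  linarith

lemma sum_sq_lt (k : ℕ) : ∑ j ∈ Finset.range k, ((j:ℝ) + 1)^2 < ((k:ℝ) + 1)^3 / 3 := by
  induction k with
  | zero => norm_num
  | succ m ih =>
    rw [Finset.sum_range_succ]
    push_cast
    nlinarith [ih, sq_nonneg ((m:ℝ)+1), Nat.cast_nonneg (α := ℝ) m]

theorem hardFun_min
    (n k : ℕ) (hk : 2 ≤ k) (hkn : k ≤ n) (p ν : ℝ) (hp : 2 ≤ p) (hν : ν ∈ Set.Icc (0:ℝ) 1) :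
    ∃ xstar : EuclideanSpace ℝ (Fin n),
      (∀ y, hardFun n k (p + ν) xstar ≤ hardFun n k (p + ν) y) ∧
      (∀ z, (∀ y, hardFun n k (p + ν) z ≤ hardFun n k (p + ν) y) → z = xstar) ∧
      hardFun n k (p + ν) xstar = -((p + ν - 1) * k) / (p + ν) ∧
      ‖xstar‖ < ((k : ℝ) + 1) ^ ((3 : ℝ) / 2) / Real.sqrt 3 := by
  obtain ⟨hν0, hν1⟩ := hν
  set q := p + ν with hqdef
  have hq1 : 1 < q := by simp only [hqdef]; linarith
  have hq0 : (0:ℝ) < q := by linarith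
  have hqne : q ≠ 0 := hq0.ne'
  have hk1 : 1 ≤ k := by omega
  have hval := hardFun_xs n k hk1 hkn q hq1
  -- minimality
  have hmin : ∀ y, hardFun n k q (xs n k) ≤ hardFun n k q y := by
    intro y
    rw [hval, decomp n k hk1 hkn q hqne y]
    have hA : 0 ≤ ∑ i ∈ Finset.Ico 1 k,
        ((1/q) * |coord y i - coord y (i + 1)| ^ q - 1/q - (coord y i - coord y (i+1) - 1)) :=
      Finset.sum_nonneg fun i _ => slackA_nonneg hq1
    have hB := slackA_nonneg (t := coord y k) hq1
    have hC : 0 ≤ ∑ i ∈ Finset.Icc (k+1) n, (1/q) * |coord y i| ^ q :=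
      Finset.sum_nonneg fun i _ => by positivity
    linarith
  refine ⟨xs n k, hmin, ?_, ?_, ?_⟩
  · -- uniqueness
    intro z hz
    have heq : hardFun n k q z = (k:ℝ)/q - k := le_antisymm (by rw [← hval]; exact hz (xs n k))
      (by rw [← hval]; exact hmin z)
    rw [decomp n k hk1 hkn q hqne z] at heq
    have hA : 0 ≤ ∑ i ∈ Finset.Ico 1 k,
        ((1/q) * |coord z i - coord z (i + 1)| ^ q - 1/q - (coord z i - coord z (i+1) - 1)) :=
      Finset.sum_nonneg fun i _ => slackA_nonneg hq1
    have hB := slackA_nonneg (t := coord z k) hq1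
    have hC : 0 ≤ ∑ i ∈ Finset.Icc (k+1) n, (1/q) * |coord z i| ^ q :=
      Finset.sum_nonneg fun i _ => by positivity
    have hAzero : ∑ i ∈ Finset.Ico 1 k,
        ((1/q) * |coord z i - coord z (i + 1)| ^ q - 1/q - (coord z i - coord z (i+1) - 1)) = 0 ∧
        ((1/q) * |coord z k| ^ q - 1/q - (coord z k - 1)) = 0 ∧
        ∑ i ∈ Finset.Icc (k+1) n, (1/q) * |coord z i| ^ q = 0 := by
      constructor; · linarith
      constructor; · linarith
      linarith
    obtain ⟨hA0, hB0, hC0⟩ := hAzero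
    have hAi : ∀ i ∈ Finset.Ico 1 k, coord z i - coord z (i+1) = 1 := by
      intro i hi
      have := (Finset.sum_eq_zero_iff_of_nonneg (fun i _ => slackA_nonneg hq1)).mp hA0 i hi
      exact slackA_eq_zero hq1 this
    have hBk : coord z k = 1 := slackA_eq_zero hq1 hB0
    have hCi : ∀ i ∈ Finset.Icc (k+1) n, coord z i = 0 := by
      intro i hi
      exact slackC_eq_zero hq1
        ((Finset.sum_eq_zero_iff_of_nonneg (fun i _ => by positivity)).mp hC0 i hi)
    -- reconstruct coordinates
    have hcoord : ∀ m i, 1 ≤ i → i + m = k → coord z i = (k:ℝ) + 1 - i := by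
      intro m
      induction m with
      | zero =>
        intro i h1 h2
        have : i = k := by omega
        subst this
        rw [hBk]; push_cast; ring
      | succ m ih =>
        intro i h1 h2
        have hi : i ∈ Finset.Ico 1 k := by simp [Finset.mem_Ico]; omega
        have hd := hAi i hi
        have hnext := ih (i+1) (by omega) (by omega)
        push_cast at hnext ⊢
        linarith
    ext j
    rw [← coord_eq z j, ← coord_eq (xs n k) j]
    rcases le_or_gt ((j:ℕ) + 1) k with h | h
    · rw [coord_xs (by omega) (by omega), if_pos h,
        hcoord (k - ((j:ℕ)+1)) ((j:ℕ)+1) (by omega) (by omega)]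
    · rw [coord_xs (by omega) (by omega), if_neg (by omega),
        hCi ((j:ℕ)+1) (by simp [Finset.mem_Icc]; omega)]
  · -- value
    rw [hval]
    field_simp
    ring
  · -- norm bound
    have hf : ∀ j : Fin n, ‖xs n k j‖ ^ 2
        = (fun m : ℕ => if m + 1 ≤ k then ((k:ℝ) - m)^2 else 0) (j : ℕ) := by
      intro j
      show ‖(if (j : ℕ) + 1 ≤ k then (k : ℝ) - (j : ℕ) else 0)‖ ^ 2
        = if (j:ℕ) + 1 ≤ k then ((k:ℝ) - (j:ℕ))^2 else 0
      split_ifs with h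
      · rw [Real.norm_eq_abs, sq_abs]
      · simp
    have hsum : ∑ j : Fin n, ‖xs n k j‖ ^ 2 = ∑ j ∈ Finset.range k, ((j:ℝ) + 1)^2 := by
      calc ∑ j : Fin n, ‖xs n k j‖ ^ 2
          = ∑ j : Fin n, (fun m : ℕ => if m + 1 ≤ k then ((k:ℝ) - m)^2 else 0) (j:ℕ) :=
            Finset.sum_congr rfl fun j _ => hf j
        _ = ∑ j ∈ Finset.range n, (if j + 1 ≤ k then ((k:ℝ) - j)^2 else 0) :=
            Fin.sum_univ_eq_sum_range (fun m : ℕ => if m + 1 ≤ k then ((k:ℝ) - m)^2 else 0) n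
        _ = ∑ j ∈ Finset.range k, (if j + 1 ≤ k then ((k:ℝ) - j)^2 else 0) := by
            rw [Finset.sum_subset (Finset.range_subset_range.mpr hkn)]
            intro x hx hx2
            simp only [Finset.mem_range] at hx hx2
            rw [if_neg (by omega)]
        _ = ∑ j ∈ Finset.range k, ((k:ℝ) - j)^2 := by
            refine Finset.sum_congr rfl fun j hj => ?_
            simp only [Finset.mem_range] at hj
            rw [if_pos (by omega)]
        _ = ∑ j ∈ Finset.range k, ((j:ℝ) + 1)^2 := by
            rw [← Finset.sum_range_reflect (fun j => ((j:ℝ) + 1)^2) k]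
            refine Finset.sum_congr rfl fun j hj => ?_
            simp only [Finset.mem_range] at hj
            have : ((k - 1 - j : ℕ) : ℝ) = (k:ℝ) - 1 - j := by
              rw [Nat.cast_sub (by omega), Nat.cast_sub (by omega)]; push_cast; ring
            rw [this]
            ring
    have hc : (0:ℝ) < ((k : ℝ) + 1) ^ ((3 : ℝ) / 2) / Real.sqrt 3 := by
      apply div_pos (Real.rpow_pos_of_pos (by positivity) _) (Real.sqrt_pos.mpr (by norm_num))
    rw [EuclideanSpace.norm_eq]
    have habs : ∀ j : Fin n, ‖xs n k j‖ = |xs n k j| := fun j => Real.norm_eq_abs _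
    rw [Real.sqrt_lt' hc]
    have hsq : (((k : ℝ) + 1) ^ ((3 : ℝ) / 2) / Real.sqrt 3) ^ 2
        = ((k:ℝ) + 1)^3 / 3 := by
      rw [div_pow, Real.sq_sqrt (by norm_num : (0:ℝ) ≤ 3)]
      congr 1
      rw [← Real.rpow_natCast (((k:ℝ)+1) ^ ((3:ℝ)/2)) 2, ← Real.rpow_mul (by positivity),
        show (3:ℝ)/2 * ((2:ℕ):ℝ) = ((3:ℕ):ℝ) by norm_num, Real.rpow_natCast]
    rw [hsq]
    calc ∑ j : Fin n, ‖xs n k j‖ ^ 2 = ∑ j ∈ Finset.range k, ((j:ℝ) + 1)^2 := hsum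
      _ < ((k:ℝ) + 1)^3 / 3 := sum_sq_lt k
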